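/- Every finite simple graph whose girth is strictly larger than its chromatic number admits a semi-transitive orientation, i.e., is semi-transitive. -/

import Mathlib

/-- `D` is an orientation of the simple graph `G`: every edge gets exactly one direction. -/
def SimpleGraph.IsOrientation {V : Type*} (G : SimpleGraph V) (D : V → V → Prop) : Prop :=
  (∀ u v, G.Adj u v ↔ D u v ∨ D v u) ∧ ∀ u v, D u v → ¬ D v u

/-- A digraph (given as a relation) is acyclic: no directed cycle. -/
def DigraphAcyclic {V : Type*} (D : V → V → Prop) : Prop :=
  ∀ v, ¬ Relation.TransGen D v v

/-- `D` is a semi-transitive orientation of `G`: it is an acyclic orientation such that for every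
directed path `p 0 → p 1 → ⋯ → p k`, either `p 0` and `p k` are non-adjacent in `G`, or
`p i → p j` is an arc for all `i < j`. -/
def SimpleGraph.IsSemitransitiveOrientation {V : Type*} (G : SimpleGraph V)
    (D : V → V → Prop) : Prop :=
  G.IsOrientation D ∧ DigraphAcyclic D ∧
    ∀ (k : ℕ) (p : Fin (k + 1) → V),
      (∀ i : Fin k, D (p i.castSucc) (p i.succ)) →
      (¬ G.Adj (p 0) (p (Fin.last k)) ∨ ∀ i j : Fin (k + 1), i < j → D (p i) (p j))

/-- A graph is semi-transitive if it admits a semi-transitive orientation. -/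
def SimpleGraph.Semitransitive {V : Type*} (G : SimpleGraph V) : Prop :=
  ∃ D : V → V → Prop, G.IsSemitransitiveOrientation D

lemma walk_of_fn {V : Type} (G : SimpleGraph V) :
    ∀ (k : ℕ) (p : Fin (k + 1) → V),
      (∀ i : Fin k, G.Adj (p i.castSucc) (p i.succ)) →
      ∃ w : G.Walk (p 0) (p (Fin.last k)),
        w.length = k ∧ w.support = List.ofFn p ∧
          w.edges = List.ofFn (fun i : Fin k => s(p i.castSucc, p i.succ)) := by
  intro k
  induction k with
  | zero =>
    intro p _
    refine ⟨(SimpleGraph.Walk.nil).copy rfl (by rw [Fin.last_zero]), ?_, ?_, ?_⟩ <;>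
      simp [List.ofFn_succ]
  | succ k ih =>
    intro p hadj
    obtain ⟨w, hl, hs, he⟩ := ih (fun i => p i.succ) (fun i => by
      simpa [Fin.succ_castSucc, -Fin.castSucc_succ] using hadj i.succ)
    have h0 : G.Adj (p 0) (p (0 : Fin (k+1)).succ) := by
      simpa using hadj 0
    refine ⟨(SimpleGraph.Walk.cons h0 w).copy rfl (by rw [Fin.succ_last]), ?_, ?_, ?_⟩
    · rw [SimpleGraph.Walk.length_copy, SimpleGraph.Walk.length_cons, hl]
    · rw [SimpleGraph.Walk.support_copy, SimpleGraph.Walk.support_cons, hs]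
      exact List.ofFn_succ.symm
    · rw [SimpleGraph.Walk.edges_copy, SimpleGraph.Walk.edges_cons, he, List.ofFn_succ]
      simp only [Fin.succ_castSucc, Fin.castSucc_zero']

/-- Every finite graph whose girth is strictly larger than its chromatic number is
semi-transitive. -/
theorem girth_gt_chromaticNumber_semitransitive (V : Type) [Fintype V] (G : SimpleGraph V)
    (h : G.chromaticNumber < G.egirth) : G.Semitransitive := by
  classical
  set n : ℕ := G.chromaticNumber.toNat with hn
  have hχ : G.chromaticNumber = (n : ℕ∞) := (ENat.coe_toNat h.ne_top).symm
  obtain ⟨C⟩ := G.colorable_chromaticNumber_of_fintype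
  set c : V → ℕ := fun v => (C v : ℕ) with hc
  have hne : ∀ u v, G.Adj u v → c u ≠ c v := fun u v huv hcuv =>
    C.valid huv (Fin.val_injective hcuv)
  refine ⟨fun u v => G.Adj u v ∧ c u < c v, ⟨fun u v => ?_, fun u v hd hd' => ?_⟩, ?_, ?_⟩
  · constructor
    · intro huv
      rcases lt_or_gt_of_ne (hne u v huv) with h1 | h1
      · exact Or.inl ⟨huv, h1⟩
      · exact Or.inr ⟨huv.symm, h1⟩
    · rintro (⟨h1, _⟩ | ⟨h1, _⟩)
      · exact h1
      · exact h1.symm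
  · exact absurd hd'.2 (not_lt.mpr hd.2.le)
  · intro v hv
    have : Relation.TransGen (fun a b : V => c a < c b) v v :=
      Relation.TransGen.mono (fun a b (hab : G.Adj a b ∧ c a < c b) => hab.2) v v hv
    have ht : Transitive (fun a b : V => c a < c b) := fun a b d hab hbd => lt_trans hab hbd
    haveI hT : IsTrans V (fun a b : V => c a < c b) := ⟨ht⟩
    rw [Relation.transGen_eq_self] at this
    exact lt_irrefl _ this
  · intro k p hp
    by_cases hadj : G.Adj (p 0) (p (Fin.last k))
    · -- right disjunct or contradiction
      match k, p, hp, hadj with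
      | 0, p, hp, hadj =>
        rw [Fin.last_zero] at hadj
        exact absurd hadj G.irrefl
      | 1, p, hp, hadj =>
        refine Or.inr fun i j hij => ?_
        have h1 := i.isLt
        have h2 := j.isLt
        rw [Fin.lt_def] at hij
        have hi : i = 0 := Fin.ext (by simp; omega)
        have hj : j = 1 := Fin.ext (by simp; omega)
        subst hi hj
        simpa using hp 0
      | (m + 2), p, hp, hadj =>
        exfalso
        have hmono : StrictMono (fun i => c (p i)) :=
          Fin.strictMono_iff_lt_succ.mpr fun i => (hp i).2
        have hpinj : Function.Injective p := fun a b hab =>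
          hmono.injective (by rw [hab])
        -- m + 2 + 1 ≤ n
        have hCpinj : Function.Injective (fun i : Fin (m + 2 + 1) => C (p i)) := by
          intro a b hab
          exact hmono.injective (congrArg Fin.val hab)
        have hcard : m + 2 + 1 ≤ n := by
          simpa using Fintype.card_le_of_injective _ hCpinj
        -- build the cycle
        obtain ⟨w, hl, hs, he⟩ := walk_of_fn G (m + 2) p fun i => (hp i).1
        have hwpath : w.IsPath := by
          rw [SimpleGraph.Walk.isPath_def, hs]
          exact (List.nodup_ofFn).mpr hpinj
        have hedge : s(p 0, p (Fin.last (m + 2))) ∉ w.reverse.edges := by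
          rw [SimpleGraph.Walk.edges_reverse, List.mem_reverse, he]
          intro hmem
          obtain ⟨i, hi⟩ := List.mem_ofFn.mp hmem
          rw [Sym2.eq_iff] at hi
          rcases hi with ⟨h1, h2⟩ | ⟨h1, h2⟩
          · have h1' : i.castSucc = 0 := hpinj h1
            have h2' : i.succ = Fin.last (m + 2) := hpinj h2
            have e1 : (i : ℕ) = 0 := Fin.ext_iff.mp h1'
            have e2 : (i : ℕ) + 1 = m + 2 := by simpa [Fin.ext_iff] using h2'
            omega
          · have h2' : i.succ = 0 := hpinj h2
            exact Fin.succ_ne_zero i h2'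
        have hcyc : (SimpleGraph.Walk.cons hadj w.reverse).IsCycle :=
          (SimpleGraph.Walk.cons_isCycle_iff _ _).mpr ⟨hwpath.reverse, hedge⟩
        have hge : G.egirth ≤ ((m + 3 : ℕ) : ℕ∞) := by
          have := (SimpleGraph.le_egirth.mp le_rfl) _ _ hcyc
          simp [hl] at this
          exact this.trans_eq (by push_cast; ring)
        have hlt : ((m + 3 : ℕ) : ℕ∞) < G.egirth := by
          calc ((m + 3 : ℕ) : ℕ∞) ≤ (n : ℕ∞) := by exact_mod_cast hcard
          _ = G.chromaticNumber := hχ.symm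
          _ < G.egirth := h
        exact absurd hge (not_le.mpr hlt)
    · exact Or.inl hadj
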